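/- (Rate bound for systematic codes with good joint spectra) Let F = {F_n: X^n → X^{m_n}} be a sequence of asymptotically good (δ = 0) linear codes that are systematic, meaning all n input symbols appear directly among the m_n output symbols. Then the sup-rate satisfies R̄(F) = limsup_n n/m_n ≤ 1/|X|. -/

import Mathlib

open Finset Filter

open scoped Classical

noncomputable def empDist {X : Type*} [Fintype X] {n : ℕ} (x : Fin n → X) : X → ℝ :=
  fun a => ((univ.filter fun i => x i = a).card : ℝ) / n

noncomputable def specS {X : Type*} [Fintype X] {n : ℕ}
    (A : Finset (Fin n → X)) (P : X → ℝ) : ℝ :=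
  ((A.filter fun x => empDist x = P).card : ℝ) / (A.card : ℝ)

noncomputable def jointSpec {X Y : Type*} [Fintype X] [Fintype Y] {n m : ℕ}
    (f : (Fin n → X) → (Fin m → Y)) (P : X → ℝ) (Q : Y → ℝ) : ℝ :=
  ((univ.filter fun x : Fin n → X => empDist x = P ∧ empDist (f x) = Q).card : ℝ) /
    ((Fintype.card X : ℝ) ^ n)

noncomputable def fullJointSpec (X Y : Type*) [Fintype X] [Fintype Y] (n m : ℕ)
    (P : X → ℝ) (Q : Y → ℝ) : ℝ :=
  specS (univ : Finset (Fin n → X)) P * specS (univ : Finset (Fin m → Y)) Q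

noncomputable def alphaE {X Y : Type*} [Fintype X] [Fintype Y] {n m : ℕ} {Ω : Type*}
    [Fintype Ω] (μ : Ω → ℝ) (F : Ω → (Fin n → X) → (Fin m → Y))
    (P : X → ℝ) (Q : Y → ℝ) : ℝ :=
  (∑ ω, μ ω * jointSpec (F ω) P Q) / fullJointSpec X Y n m P Q

def permAct {X : Type*} {n : ℕ} (σ : Equiv.Perm (Fin n)) (x : Fin n → X) : Fin n → X :=
  fun i => x (σ.symm i)

noncomputable def entH {X : Type*} [Fintype X] (P : X → ℝ) : ℝ :=
  ∑ a, -(P a * Real.log (P a))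

noncomputable def binEnt (x : ℝ) : ℝ := -(x * Real.log x) - (1 - x) * Real.log (1 - x)

lemma empDist_const_unique {X : Type*} [Fintype X] {n : ℕ} (hn : 0 < n) (a : X)
    (x' : Fin n → X) (h : empDist x' = empDist (fun _ : Fin n => a)) :
    x' = fun _ => a := by
  have ha : empDist (fun _ : Fin n => a) a = 1 := by
    have : (univ.filter fun i : Fin n => a = a) = univ := by simp
    simp [empDist, this, Finset.card_univ, hn.ne', div_self]
  have h2 : ((univ.filter fun i => x' i = a).card : ℝ) / n = 1 := by
    have := congrFun h a; rwa [ha] at this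
  have h3 : (univ.filter fun i => x' i = a).card = n := by
    have hn' : (n : ℝ) ≠ 0 := by exact_mod_cast hn.ne'
    field_simp at h2
    exact_mod_cast h2
  have h4 : (univ.filter fun i => x' i = a) = univ :=
    Finset.eq_univ_of_card _ (by simpa using h3)
  funext i
  have hi : i ∈ univ.filter fun i => x' i = a := by rw [h4]; exact mem_univ i
  simpa using hi

lemma card_spec_le {X : Type*} [Fintype X] {m : ℕ} (hm : 0 < m) (a : X) (y : Fin m → X) :
    (univ.filter fun y' : Fin m → X => empDist y' = empDist y).card
      ≤ m.choose ((univ.filter fun i => y i = a).card)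
          * (Fintype.card X - 1) ^ (m - (univ.filter fun i => y i = a).card) := by
  set k := (univ.filter fun i => y i = a).card with hk
  have hsub : (univ.filter fun y' : Fin m → X => empDist y' = empDist y)
      ⊆ (Finset.univ.powersetCard k).biUnion
        (fun s => Fintype.piFinset (fun i => if i ∈ s then {a} else Finset.univ.erase a)) := by
    intro y' hy'
    simp only [mem_filter, mem_univ, true_and] at hy'
    have hc : (univ.filter fun i => y' i = a).card = k := by
      have := congrFun hy' a
      simp only [empDist] at this
      have hm' : (m : ℝ) ≠ 0 := by exact_mod_cast hm.ne'
      field_simp at this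
      exact_mod_cast this
    refine Finset.mem_biUnion.2 ⟨univ.filter fun i => y' i = a, ?_, ?_⟩
    · exact Finset.mem_powersetCard_univ.2 hc
    · refine Fintype.mem_piFinset.2 fun i => ?_
      by_cases h : y' i = a
      · simp [h]
      · simp [h]
  calc (univ.filter fun y' : Fin m → X => empDist y' = empDist y).card
      ≤ _ := Finset.card_le_card hsub
    _ ≤ ∑ s ∈ Finset.univ.powersetCard k,
          (Fintype.piFinset (fun i => if i ∈ s then ({a} : Finset X) else Finset.univ.erase a)).card :=
        Finset.card_biUnion_le
    _ ≤ m.choose k * (Fintype.card X - 1) ^ (m - k) := by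
        have hcard : ∀ s ∈ (Finset.univ : Finset (Fin m)).powersetCard k,
            (Fintype.piFinset (fun i => if i ∈ s then ({a} : Finset X) else Finset.univ.erase a)).card
              = (Fintype.card X - 1) ^ (m - k) := by
          intro s hs
          have hsk : s.card = k := (Finset.mem_powersetCard_univ.1 hs)
          rw [Fintype.card_piFinset]
          have : ∀ i : Fin m, (if i ∈ s then ({a} : Finset X) else Finset.univ.erase a).card
              = if i ∈ s then 1 else (Fintype.card X - 1) := by
            intro i; split <;> simp [Finset.card_erase_of_mem]
          rw [Finset.prod_congr rfl (fun i _ => this i),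
            ← Finset.prod_mul_prod_compl s (fun i => if i ∈ s then 1 else (Fintype.card X - 1))]
          have h1 : ∏ i ∈ s, (if i ∈ s then 1 else (Fintype.card X - 1)) = 1 :=
            Finset.prod_eq_one fun i hi => by simp [hi]
          have h2 : ∏ i ∈ sᶜ, (if i ∈ s then 1 else (Fintype.card X - 1))
              = (Fintype.card X - 1) ^ (m - k) :=
            calc ∏ i ∈ sᶜ, (if i ∈ s then 1 else (Fintype.card X - 1))
                = ∏ _i ∈ sᶜ, (Fintype.card X - 1) :=
                  Finset.prod_congr rfl (fun i hi => if_neg (Finset.mem_compl.1 hi))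
              _ = (Fintype.card X - 1) ^ (sᶜ.card) := Finset.prod_const _
              _ = (Fintype.card X - 1) ^ (m - k) := by
                  rw [Finset.card_compl, Fintype.card_fin, hsk]
          rw [h1, h2, one_mul]
        rw [Finset.sum_congr rfl hcard, Finset.sum_const, Finset.card_powersetCard,
          Finset.card_univ, Fintype.card_fin, smul_eq_mul]


lemma choose_bound {t : ℝ} (h0 : 0 ≤ t) (h1 : t ≤ 1) {k m : ℕ} (hk : k ≤ m) :
    (m.choose k : ℝ) * t ^ k * (1 - t) ^ (m - k) ≤ 1 := by
  have h := add_pow t (1 - t) m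
  rw [show t + (1 - t) = 1 by ring, one_pow] at h
  have hle := Finset.single_le_sum
    (f := fun j => t ^ j * (1 - t) ^ (m - j) * (m.choose j : ℝ))
    (fun j _ => by
      have h1t : (0:ℝ) ≤ 1 - t := by linarith
      exact mul_nonneg (mul_nonneg (pow_nonneg h0 _) (pow_nonneg h1t _)) (Nat.cast_nonneg _))
    (Finset.mem_range.2 (Nat.lt_succ_of_le hk))
  rw [← h] at hle
  calc (m.choose k : ℝ) * t ^ k * (1 - t) ^ (m - k)
      = t ^ k * (1 - t) ^ (m - k) * (m.choose k : ℝ) := by ring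
    _ ≤ 1 := hle

lemma kl_pos {q t : ℝ} (hq : 2 ≤ q) (ht : 1 / q < t) (ht1 : t < 1) :
    0 < Real.log q - (-(t * Real.log t) - (1 - t) * Real.log (1 - t)
      + (1 - t) * Real.log (q - 1)) := by
  have hq0 : (0:ℝ) < q := by linarith
  have ht0 : 0 < t := lt_trans (by positivity) ht
  have h1t : 0 < 1 - t := by linarith
  have hq1 : (0:ℝ) < q - 1 := by linarith
  have htq : 1 < t * q := by
    rw [div_lt_iff₀ hq0] at ht; linarith
  set u : ℝ := 1 / (t * q) with hu
  set v : ℝ := (q - 1) / ((1 - t) * q) with hv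
  have hu0 : 0 < u := by positivity
  have hv0 : 0 < v := by positivity
  have hu1 : u ≠ 1 := by
    have : u < 1 := by rw [hu, div_lt_one (by positivity)]; linarith
    exact this.ne
  have hlu : Real.log u < u - 1 := Real.log_lt_sub_one_of_pos hu0 hu1
  have hlv : Real.log v ≤ v - 1 := Real.log_le_sub_one_of_pos hv0
  have e1 : t * (u - 1) = 1 / q - t := by
    rw [hu]; field_simp
  have e2 : (1 - t) * (v - 1) = (q - 1) / q - (1 - t) := by
    rw [hv]; field_simp
  have key : t * Real.log u + (1 - t) * Real.log v < 0 := by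
    have k1 : t * Real.log u < 1 / q - t := by
      rw [← e1]; exact (mul_lt_mul_of_pos_left hlu ht0)
    have k2 : (1 - t) * Real.log v ≤ (q - 1) / q - (1 - t) := by
      rw [← e2]; exact (mul_le_mul_of_nonneg_left hlv h1t.le)
    have : 1 / q + (q - 1) / q = 1 := by field_simp; ring
    linarith
  have lu : Real.log u = -Real.log t - Real.log q := by
    rw [hu, one_div, Real.log_inv, Real.log_mul ht0.ne' hq0.ne']; ring
  have lv : Real.log v = Real.log (q - 1) - Real.log (1 - t) - Real.log q := by
    rw [hv, Real.log_div hq1.ne' (by positivity), Real.log_mul h1t.ne' hq0.ne']; ring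
  rw [lu, lv] at key
  nlinarith [key]



set_option maxHeartbeats 1000000 in
theorem stmt17 {X : Type*} [Fintype X] [AddCommGroup X] [Nontrivial X]
    (m : ℕ → ℕ) (f : ∀ n, (Fin n → X) →+ (Fin (m n) → X))
    (hgood : ∀ ε > (0 : ℝ), ∀ᶠ n : ℕ in atTop, ∀ x : Fin n → X, x ≠ 0 → ∀ y : Fin (m n) → X,
      jointSpec (⇑(f n)) (empDist x) (empDist y) /
          fullJointSpec X X n (m n) (empDist x) (empDist y)
        ≤ Real.exp (n * ε))
    (hsys : ∀ n, ∃ ι : Fin n → Fin (m n), Function.Injective ι ∧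
      ∀ x : Fin n → X, ∀ i, f n x (ι i) = x i) :
    ∀ ε > (0 : ℝ), ∀ᶠ n : ℕ in atTop,
      (n : ℝ) / (m n : ℝ) ≤ 1 / (Fintype.card X : ℝ) + ε := by
  intro ε hε
  obtain ⟨a, ha⟩ := exists_ne (0 : X)
  have hq2 : 2 ≤ Fintype.card X := Fintype.one_lt_card
  obtain ⟨Q, hQdef⟩ : ∃ q : ℝ, q = (Fintype.card X : ℝ) := ⟨_, rfl⟩
  rw [← hQdef]
  have hQ2 : (2:ℝ) ≤ Q := by rw [hQdef]; exact_mod_cast hq2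
  have hQ0 : (0:ℝ) < Q := by linarith
  have hnm : ∀ n, n ≤ m n := by
    intro n
    obtain ⟨ι, hι, -⟩ := hsys n
    simpa using Fintype.card_le_of_injective ι hι
  by_cases hcase : 1 - 1/Q ≤ ε
  · refine Eventually.of_forall fun n => ?_
    have h1 : (1:ℝ) ≤ 1/Q + ε := by linarith
    rcases Nat.eq_zero_or_pos (m n) with h | h
    · have : n = 0 := Nat.le_zero.mp (h ▸ hnm n)
      simp [this]; positivity
    · have hmR : (0:ℝ) < m n := by exact_mod_cast h
      calc (n:ℝ) / (m n : ℝ) ≤ 1 := by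
            rw [div_le_one hmR]; exact_mod_cast hnm n
        _ ≤ 1/Q + ε := h1
  · push_neg at hcase
    obtain ⟨t, htdef⟩ : ∃ t : ℝ, t = 1/Q + ε := ⟨_, rfl⟩
    rw [show 1/Q + ε = t from htdef.symm]
    have ht : 1/Q < t := by rw [htdef]; linarith
    have ht1 : t < 1 := by rw [htdef]; linarith
    have ht0 : 0 < t := lt_trans (by positivity) ht
    have h1t : 0 < 1 - t := by linarith
    have hQ1 : (0:ℝ) < Q - 1 := by linarith
    have htq : 1 < t * Q := by rw [div_lt_iff₀ hQ0] at ht; linarith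
    obtain ⟨c, hcdef⟩ : ∃ c : ℝ, c = Real.log Q - (-(t * Real.log t)
      - (1 - t) * Real.log (1 - t) + (1 - t) * Real.log (Q - 1)) := ⟨_, rfl⟩
    have hc : 0 < c := by rw [hcdef]; exact kl_pos hQ2 ht ht1
    filter_upwards [hgood (c/2) (by positivity), eventually_ge_atTop 1] with n hn hn1
    by_contra hcon
    push_neg at hcon
    -- setup
    have hmn : n ≤ m n := hnm n
    have hm1 : 1 ≤ m n := le_trans hn1 hmn
    have hmR : (0:ℝ) < (m n : ℝ) := by exact_mod_cast hm1
    have hnR : (0:ℝ) < (n : ℝ) := by exact_mod_cast hn1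
    have hnt : t * (m n : ℝ) < n := by
      rw [lt_div_iff₀ hmR] at hcon; linarith
    obtain ⟨ι, hι, hιs⟩ := hsys n
    have hn0 : 0 < n := hn1
    have hx0 : (fun _ : Fin n => a) ≠ 0 := by
      intro h
      exact ha (congrFun h ⟨0, hn0⟩)
    set y : Fin (m n) → X := f n (fun _ => a) with hy
    set k : ℕ := (univ.filter fun i => y i = a).card with hkdef
    have hkn : n ≤ k := by
      have hmem : ∀ j : Fin n, ι j ∈ univ.filter fun i => y i = a := by
        intro j
        simp only [mem_filter, mem_univ, true_and, hy]
        exact hιs (fun _ => a) j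
      calc n = (univ : Finset (Fin n)).card := by simp
        _ ≤ k := Finset.card_le_card_of_injOn ι (fun j _ => hmem j) (Function.Injective.injOn hι)
    have hkm : k ≤ m n := by
      calc k ≤ (univ : Finset (Fin (m n))).card := Finset.card_le_card (Finset.filter_subset _ _)
        _ = m n := by simp
    have hktR : t * (m n : ℝ) ≤ (k:ℝ) := le_trans hnt.le (by exact_mod_cast hkn)
    -- spectrum bounds
    have hQn : (0:ℝ) < Q ^ n := by positivity
    have hQm : (0:ℝ) < Q ^ (m n) := by positivity
    have hcardun : ((univ : Finset (Fin n → X)).card : ℝ) = Q ^ n := by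
      rw [hQdef]; simp [Finset.card_univ]
    have hcardum : ((univ : Finset (Fin (m n) → X)).card : ℝ) = Q ^ (m n) := by
      rw [hQdef]; simp [Finset.card_univ]
    -- A ≥ 1/Q^n
    have hA : 1 / Q ^ n ≤ jointSpec (⇑(f n)) (empDist (fun _ : Fin n => a)) (empDist y) := by
      unfold jointSpec
      rw [← hQdef]
      gcongr
      have : (fun _ : Fin n => a) ∈ univ.filter fun x : Fin n → X =>
          empDist x = empDist (fun _ : Fin n => a) ∧ empDist (f n x) = empDist y := by
        simp [hy]
      exact_mod_cast Nat.one_le_cast.2 (Finset.card_pos.2 ⟨_, this⟩)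
    -- specS bounds
    set Nk : ℝ := ((m n).choose k : ℝ) * (Q - 1) ^ (m n - k) with hNk
    have hNk0 : 0 < Nk := by
      have : 0 < (m n).choose k := Nat.choose_pos hkm
      have h2 : (0:ℝ) < ((m n).choose k : ℝ) := by exact_mod_cast this
      positivity
    have hSP : specS (univ : Finset (Fin n → X)) (empDist (fun _ : Fin n => a)) ≤ 1 / Q ^ n := by
      unfold specS
      rw [hcardun]
      gcongr
      have hsub : (univ.filter fun x' : Fin n → X => empDist x' = empDist (fun _ : Fin n => a))
          ⊆ {fun _ => a} := by
        intro x' hx'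
        simp only [mem_filter, mem_univ, true_and] at hx'
        simp [empDist_const_unique hn0 a x' hx']
      have := Finset.card_le_card hsub
      simp only [Finset.card_singleton] at this
      exact_mod_cast this
    have hSQ : specS (univ : Finset (Fin (m n) → X)) (empDist y) ≤ Nk / Q ^ (m n) := by
      unfold specS
      rw [hcardum]
      gcongr
      have := card_spec_le hm1 a y
      rw [← hkdef] at this
      calc ((univ.filter fun y' : Fin (m n) → X => empDist y' = empDist y).card : ℝ)
          ≤ (((m n).choose k * (Fintype.card X - 1) ^ (m n - k) : ℕ) : ℝ) := by exact_mod_cast this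
        _ = Nk := by
            rw [hNk, hQdef]
            push_cast [Nat.cast_sub (le_of_lt Fintype.one_lt_card)]
            ring
    have hSP0 : 0 < specS (univ : Finset (Fin n → X)) (empDist (fun _ : Fin n => a)) := by
      unfold specS
      rw [hcardun]
      apply div_pos _ hQn
      have : (fun _ : Fin n => a) ∈ univ.filter fun x' : Fin n → X =>
          empDist x' = empDist (fun _ : Fin n => a) := by simp
      exact_mod_cast Finset.card_pos.2 ⟨_, this⟩
    have hSQ0 : 0 < specS (univ : Finset (Fin (m n) → X)) (empDist y) := by
      unfold specS
      rw [hcardum]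
      apply div_pos _ hQm
      have : y ∈ univ.filter fun y' : Fin (m n) → X => empDist y' = empDist y := by simp
      exact_mod_cast Finset.card_pos.2 ⟨_, this⟩
    have hB0 : 0 < fullJointSpec X X n (m n) (empDist (fun _ : Fin n => a)) (empDist y) :=
      mul_pos hSP0 hSQ0
    have hB : fullJointSpec X X n (m n) (empDist (fun _ : Fin n => a)) (empDist y)
        ≤ (1 / Q ^ n) * (Nk / Q ^ (m n)) := by
      unfold fullJointSpec
      exact mul_le_mul hSP hSQ hSQ0.le (by positivity)
    have hgn := hn (fun _ => a) hx0 y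
    have hAB : jointSpec (⇑(f n)) (empDist (fun _ : Fin n => a)) (empDist y)
        ≤ Real.exp (n * (c/2)) * fullJointSpec X X n (m n) (empDist (fun _ : Fin n => a)) (empDist y) :=
      (div_le_iff₀ hB0).1 hgn
    have h5 : 1 / Q ^ n ≤ Real.exp (n * (c/2)) * ((1 / Q ^ n) * (Nk / Q ^ (m n))) :=
      le_trans hA (le_trans hAB (by
        apply mul_le_mul_of_nonneg_left hB (Real.exp_pos _).le))
    have h6 : (1:ℝ) ≤ Real.exp (n * (c/2)) * Nk / Q ^ (m n) := by
      have h5' : (1:ℝ) * (1 / Q ^ n) ≤ (Real.exp (n * (c/2)) * Nk / Q ^ (m n)) * (1 / Q ^ n) := by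
        calc (1:ℝ) * (1 / Q ^ n) = 1 / Q ^ n := one_mul _
          _ ≤ Real.exp (n * (c/2)) * ((1 / Q ^ n) * (Nk / Q ^ (m n))) := h5
          _ = (Real.exp (n * (c/2)) * Nk / Q ^ (m n)) * (1 / Q ^ n) := by ring
      exact le_of_mul_le_mul_right h5' (by positivity)
    have h7 : Q ^ (m n) ≤ Real.exp (n * (c/2)) * Nk := (one_le_div hQm).1 h6
    -- binomial bound
    have hchoose : ((m n).choose k : ℝ) ≤ 1 / (t ^ k * (1 - t) ^ (m n - k)) := by
      rw [le_div_iff₀ (by positivity)]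
      calc ((m n).choose k : ℝ) * (t ^ k * (1 - t) ^ (m n - k))
          = ((m n).choose k : ℝ) * t ^ k * (1 - t) ^ (m n - k) := by ring
        _ ≤ 1 := choose_bound ht0.le ht1.le hkm
    have h8 : Q ^ (m n) ≤ Real.exp (n * (c/2)) * ((Q - 1) ^ (m n - k) / (t ^ k * (1 - t) ^ (m n - k))) := by
      refine le_trans h7 ?_
      rw [hNk]
      have : ((m n).choose k : ℝ) * (Q - 1) ^ (m n - k)
          ≤ (Q - 1) ^ (m n - k) / (t ^ k * (1 - t) ^ (m n - k)) := by
        rw [div_eq_mul_one_div]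
        calc ((m n).choose k : ℝ) * (Q - 1) ^ (m n - k)
            = (Q - 1) ^ (m n - k) * ((m n).choose k : ℝ) := by ring
          _ ≤ (Q - 1) ^ (m n - k) * (1 / (t ^ k * (1 - t) ^ (m n - k))) := by
              apply mul_le_mul_of_nonneg_left hchoose (by positivity)
      exact mul_le_mul_of_nonneg_left this (Real.exp_pos _).le
    -- take logs
    have hlog : (m n : ℝ) * Real.log Q ≤ n * (c/2)
        + ((m n : ℝ) - k) * (Real.log (Q-1) - Real.log (1-t)) + k * (- Real.log t) := by
      have hL := Real.log_le_log (by positivity) h8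
      rw [Real.log_pow] at hL
      rw [Real.log_mul (Real.exp_ne_zero _) (by positivity),
        Real.log_exp, Real.log_div (by positivity) (by positivity),
        Real.log_mul (by positivity) (by positivity),
        Real.log_pow, Real.log_pow, Real.log_pow] at hL
      have hmk : ((m n - k : ℕ) : ℝ) = (m n : ℝ) - k := by
        push_cast [Nat.cast_sub hkm]; ring
      rw [hmk] at hL
      linarith
    -- monotonicity step
    have hL12 : - Real.log t ≤ Real.log (Q - 1) - Real.log (1 - t) := by
      have harg : (1 - t) / t ≤ Q - 1 := by
        rw [div_le_iff₀ ht0]; nlinarith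
      have := Real.log_le_log (by positivity) harg
      rw [Real.log_div (by positivity) ht0.ne'] at this
      linarith
    have hfinal : (m n : ℝ) * Real.log Q ≤ n * (c/2) + (m n : ℝ) * (Real.log Q - c) := by
      have hphi : ((m n : ℝ) - k) * (Real.log (Q-1) - Real.log (1-t)) + k * (- Real.log t)
          ≤ (m n : ℝ) * (Real.log Q - c) := by
        have hkey : ((k:ℝ) - t * m n) * ((- Real.log t) - (Real.log (Q-1) - Real.log (1-t))) ≤ 0 :=
          mul_nonpos_of_nonneg_of_nonpos (by linarith) (by linarith)
        have hexp : (m n : ℝ) * (Real.log Q - c)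
            = t * (m n) * (- Real.log t) + (1 - t) * (m n) * (Real.log (Q-1) - Real.log (1-t)) := by
          rw [hcdef]; ring
        rw [hexp]
        nlinarith [hkey]
      linarith
    have hmc : (m n : ℝ) * c ≤ (n : ℝ) * (c/2) := by linarith
    have hmn' : (n:ℝ) ≤ (m n : ℝ) := by exact_mod_cast hmn
    linarith [mul_le_mul_of_nonneg_right hmn' hc.le, mul_pos hmR hc, hmc]
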